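/- arXiv:0902.1364 — 2 statements merged into one kernel-verified Lean document; each statement's English description precedes it below -/
import Mathlib

section
/- Let G be a k-connected chordal graph with at least k+2 vertices and clique tree T. An edge e = {u,v} ∈ E(G) is contractible if and only if either (i) e lies in a unique maximal clique of G, or (ii) for every edge {x,y} of T with {u,v} ⊆ l(x) ∩ l(y), one has |l(x) ∩ l(y)| > k. -/
open SimpleGraph

/-- `S` is a vertex separator of `G`: deleting `S` leaves a disconnected graph
(two vertices with no path between them). -/
def IsSeparator {V : Type*} (G : SimpleGraph V) (S : Set V) : Prop :=
  ¬ (G.induce (Sᶜ : Set V)).Preconnected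

/-- `S` is a minimal vertex separator of `G`. -/
def MinimalSeparator {V : Type*} (G : SimpleGraph V) (S : Set V) : Prop :=
  IsSeparator G S ∧ ∀ S' ⊂ S, ¬ IsSeparator G S'

/-- `G` is `k`-connected: more than `k` vertices and every separator has size at least `k`. -/
def KConnected {V : Type*} [Fintype V] (k : ℕ) (G : SimpleGraph V) : Prop :=
  k < Fintype.card V ∧ ∀ S : Set V, IsSeparator G S → k ≤ S.ncard

/-- Vertex connectivity: least size of a set whose removal disconnects the graph
or leaves at most one vertex. -/
noncomputable def vConn {V : Type*} [Fintype V] (G : SimpleGraph V) : ℕ :=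
  sInf {n | ∃ S : Set V, S.ncard = n ∧ (IsSeparator G S ∨ (Sᶜ : Set V).ncard ≤ 1)}

/-- Contraction of the edge `{u,v}`: the vertex `v` is deleted and `u` plays the
role of the merged vertex `z`, adjacent to all former neighbors of `u` or `v`. -/
def contract {V : Type*} (G : SimpleGraph V) (u v : V) :
    SimpleGraph {x : V // x ≠ v} where
  Adj a b := a ≠ b ∧ (G.Adj a b ∨ (a.1 = u ∧ G.Adj v b) ∨ (b.1 = u ∧ G.Adj v a))
  symm := ⟨by
    rintro a b ⟨h1, h2 | ⟨h3, h4⟩ | ⟨h3, h4⟩⟩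
    · exact ⟨h1.symm, Or.inl h2.symm⟩
    · exact ⟨h1.symm, Or.inr (Or.inr ⟨h3, h4⟩)⟩
    · exact ⟨h1.symm, Or.inr (Or.inl ⟨h3, h4⟩)⟩⟩
  loopless := ⟨by rintro a ⟨h, -⟩; exact h rfl⟩

/-- A tree decomposition of `G` with tree `T` and bags `l`. -/
structure TreeDecomp {V ι : Type*} (G : SimpleGraph V) (T : SimpleGraph ι)
    (l : ι → Set V) : Prop where
  conn : T.Connected
  acyclic : T.IsAcyclic
  coversV : ∀ v : V, ∃ x : ι, v ∈ l x
  coversE : ∀ ⦃u v : V⦄, G.Adj u v → ∃ x : ι, u ∈ l x ∧ v ∈ l x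
  subtree : ∀ v : V, (T.induce {x : ι | v ∈ l x}).Connected

/-- A clique tree of `G`: a tree decomposition whose bags are exactly the
maximal cliques of `G`. -/
def IsCliqueTree {V ι : Type*} (G : SimpleGraph V) (T : SimpleGraph ι)
    (l : ι → Set V) : Prop :=
  TreeDecomp G T l ∧ (∀ x : ι, Maximal G.IsClique (l x)) ∧
    ∀ C : Set V, Maximal G.IsClique C → ∃ x : ι, l x = C

/-- `G` is chordal: every cycle of length at least 4 has a chord. -/
def IsChordal {V : Type*} (G : SimpleGraph V) : Prop :=
  ∀ (v : V) (w : G.Walk v v), w.IsCycle → 4 ≤ w.length →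
    ∃ a b : V, G.Adj a b ∧ a ∈ w.support ∧ b ∈ w.support ∧ s(a, b) ∉ w.edges

/-- A split partition of `G`: `I` is a stable set, `K` a clique, partitioning the vertices. -/
def IsSplitPartition {V : Type*} (G : SimpleGraph V) (I K : Set V) : Prop :=
  I ∪ K = Set.univ ∧ Disjoint I K ∧ (∀ a ∈ I, ∀ b ∈ I, ¬ G.Adj a b) ∧ G.IsClique K

open SimpleGraph

section Aux
variable {V ι : Type*}

/-- From reachability in an induced subgraph, get a walk in the big graph supported in the set. -/
lemma induce_reachable_exists_walk {T : SimpleGraph ι} {s : Set ι} {p q : ι}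
    (hp : p ∈ s) (hq : q ∈ s) (h : (T.induce s).Reachable ⟨p, hp⟩ ⟨q, hq⟩) :
    ∃ w : T.Walk p q, ∀ n ∈ w.support, n ∈ s := by
  obtain ⟨w0⟩ := h
  let f : T.induce s →g T := ⟨Subtype.val, fun {a b} hab => hab⟩
  refine ⟨w0.map f, ?_⟩
  intro n hn
  rw [SimpleGraph.Walk.support_map] at hn
  obtain ⟨m, hm, rfl⟩ := List.mem_map.mp hn
  exact m.2

/-- Along a walk, a property that holds at the start and fails at the end flips on an edge. -/
lemma exists_transition {T : SimpleGraph ι} (P : ι → Prop) :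
    ∀ {a b : ι} (_ : T.Walk a b), P a → ¬ P b → ∃ x y, T.Adj x y ∧ P x ∧ ¬ P y := by
  intro a b w
  induction w with
  | nil => intro h h'; exact absurd h h'
  | @cons a c b h q ih =>
    intro ha hb
    by_cases hc : P c
    · exact ih hc hb
    · exact ⟨_, _, h, ha, hc⟩

private lemma side_aux {T : SimpleGraph ι} (x y : ι) :
    ∀ {n m : ι}, T.Walk n m →
      ((T.deleteEdges {s(x,y)}).Reachable m x ∨ (T.deleteEdges {s(x,y)}).Reachable m y) →
      ((T.deleteEdges {s(x,y)}).Reachable n x ∨ (T.deleteEdges {s(x,y)}).Reachable n y) := by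
  intro n m w
  induction w with
  | nil => exact id
  | @cons a c b h q ih =>
    intro hm
    rcases ih hm with hc | hc
    · by_cases he : s(a, c) = s(x, y)
      · rcases Sym2.eq_iff.mp he with ⟨ha, hcy⟩ | ⟨ha, hcy⟩
        · exact Or.inl (ha ▸ Reachable.refl _)
        · exact Or.inr (ha ▸ Reachable.refl _)
      · exact Or.inl ((SimpleGraph.Adj.reachable (by
          rw [SimpleGraph.deleteEdges_adj]; exact ⟨h, by simpa using he⟩)).trans hc)
    · by_cases he : s(a, c) = s(x, y)
      · rcases Sym2.eq_iff.mp he with ⟨ha, hcy⟩ | ⟨ha, hcy⟩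
        · exact Or.inl (ha ▸ Reachable.refl _)
        · exact Or.inr (ha ▸ Reachable.refl _)
      · exact Or.inr ((SimpleGraph.Adj.reachable (by
          rw [SimpleGraph.deleteEdges_adj]; exact ⟨h, by simpa using he⟩)).trans hc)

/-- Every vertex reaches one side of a deleted edge in a connected graph. -/
lemma side_total {T : SimpleGraph ι} (hT : T.Connected) (x y : ι) (n : ι) :
    (T.deleteEdges {s(x,y)}).Reachable n x ∨ (T.deleteEdges {s(x,y)}).Reachable n y := by
  obtain ⟨w⟩ := hT.preconnected n x
  exact side_aux x y w (Or.inl (Reachable.refl _))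

lemma bridge_not_reachable {T : SimpleGraph ι} (hac : T.IsAcyclic) {x y : ι} (hxy : T.Adj x y) :
    ¬ (T.deleteEdges {s(x,y)}).Reachable x y := by
  have := (isAcyclic_iff_forall_adj_isBridge.mp hac) hxy
  rw [isBridge_iff] at this
  exact this

/-- A walk between the two sides of a tree edge passes through both endpoints of the edge. -/
lemma crossing_walk {T : SimpleGraph ι} (hac : T.IsAcyclic) {x y : ι} (hxy : T.Adj x y)
    {n m : ι} (hn : (T.deleteEdges {s(x,y)}).Reachable n x)
    (hm : (T.deleteEdges {s(x,y)}).Reachable m y) (w : T.Walk n m) :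
    x ∈ w.support ∧ y ∈ w.support := by
  by_cases he : s(x, y) ∈ w.edges
  · exact ⟨w.fst_mem_support_of_mem_edges he, w.snd_mem_support_of_mem_edges he⟩
  · exfalso
    have hw : ∀ e ∈ w.edges, e ∉ ({s(x,y)} : Set (Sym2 ι)) := by
      intro e hee hmem
      rw [Set.mem_singleton_iff] at hmem
      exact he (hmem ▸ hee)
    have : (T.deleteEdges {s(x,y)}).Reachable n m := ⟨w.toDeleteEdges _ hw⟩
    exact bridge_not_reachable hac hxy (hn.symm.trans (this.trans hm))
end Aux

section MyAux2
open SimpleGraph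
variable {V ι : Type*}

/-- The intersection of the bags of a tree edge with distinct bags is a separator. -/
lemma sep_of_treeEdge {G : SimpleGraph V} {T : SimpleGraph ι} {l : ι → Set V}
    (hTD : TreeDecomp G T l) (hmax : ∀ x : ι, Maximal G.IsClique (l x))
    {x y : ι} (hxy : T.Adj x y) (hne : l x ≠ l y) : IsSeparator G (l x ∩ l y) := by
  set T' := T.deleteEdges {s(x,y)} with hT'
  set I := l x ∩ l y with hI
  set A : Set V := {w | ∃ n, T'.Reachable n x ∧ w ∈ l n} with hA
  set B : Set V := {w | ∃ n, T'.Reachable n y ∧ w ∈ l n} with hB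
  have hAB : ∀ w, w ∈ A → w ∈ B → w ∈ I := by
    rintro w ⟨n1, hr1, hw1⟩ ⟨n2, hr2, hw2⟩
    have hconn := hTD.subtree w
    obtain ⟨wk, hsupp⟩ := induce_reachable_exists_walk (s := {n | w ∈ l n}) hw1 hw2
      (hconn.preconnected _ _)
    obtain ⟨hxs, hys⟩ := crossing_walk hTD.acyclic hxy hr1 hr2 wk
    exact ⟨hsupp _ hxs, hsupp _ hys⟩
  have hxA : ∀ w ∈ l x, w ∈ A := fun w hw => ⟨x, Reachable.refl _, hw⟩
  have hyB : ∀ w ∈ l y, w ∈ B := fun w hw => ⟨y, Reachable.refl _, hw⟩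
  have hxny : ¬ l x ⊆ l y := fun hsub => hne (le_antisymm hsub ((hmax x).2 (hmax y).1 hsub))
  have hynx : ¬ l y ⊆ l x := fun hsub => hne (le_antisymm ((hmax y).2 (hmax x).1 hsub) hsub)
  obtain ⟨a, haX, haY⟩ := Set.not_subset.mp hxny
  obtain ⟨b, hbY, hbX⟩ := Set.not_subset.mp hynx
  have haA : a ∈ A := hxA a haX
  have haB : a ∉ B := fun h => haY (hAB a haA h).2
  have hbB : b ∈ B := hyB b hbY
  have hbA : b ∉ A := fun h => hbX (hAB b h hbB).1
  have hedge : ∀ ⦃w w' : V⦄, G.Adj w w' → (w ∈ A ∧ w' ∈ A) ∨ (w ∈ B ∧ w' ∈ B) := by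
    intro w w' hww
    obtain ⟨n, hw, hw'⟩ := hTD.coversE hww
    rcases side_total hTD.conn x y n with h | h
    · exact Or.inl ⟨⟨n, h, hw⟩, ⟨n, h, hw'⟩⟩
    · exact Or.inr ⟨⟨n, h, hw⟩, ⟨n, h, hw'⟩⟩
  intro hpre
  have key : ∀ {c d : ↥(Iᶜ)} (_ : (G.induce (Iᶜ : Set V)).Walk c d),
      (c : V) ∈ A → (c : V) ∉ B → ((d : V) ∈ A ∧ (d : V) ∉ B) := by
    intro c d wk
    induction wk with
    | nil => exact fun h h' => ⟨h, h'⟩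
    | @cons c e d h q ih =>
      intro hcA hcB
      have hadj : G.Adj (c : V) (e : V) := h
      rcases hedge hadj with ⟨h1, h2⟩ | ⟨h1, h2⟩
      · exact ih h2 (fun hB => e.2 (hAB _ h2 hB))
      · exact absurd h1 hcB
  have haI : a ∈ (Iᶜ : Set V) := fun h => haY h.2
  have hbI : b ∈ (Iᶜ : Set V) := fun h => hbX h.1
  obtain ⟨wk⟩ := hpre ⟨a, haI⟩ ⟨b, hbI⟩
  exact hbA (key wk haA haB).1
end MyAux2

section MyAux3
open SimpleGraph
variable {V ι : Type*} [Fintype V]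

/-- In a k-connected graph with a clique tree, every bag has more than k vertices. -/
lemma bag_large {G : SimpleGraph V} {k : ℕ} (hcard : k + 2 ≤ Fintype.card V)
    (hconn : KConnected k G) {T : SimpleGraph ι} {l : ι → Set V}
    (hTD : TreeDecomp G T l) (hmax : ∀ x : ι, Maximal G.IsClique (l x)) (z : ι) :
    k < (l z).ncard := by
  by_cases hflat : ∀ n : ι, l n = l z
  · have huniv : l z = Set.univ := by
      apply Set.eq_univ_of_forall
      intro w
      obtain ⟨n, hn⟩ := hTD.coversV w
      exact hflat n ▸ hn
    rw [huniv, Set.ncard_univ, Nat.card_eq_fintype_card]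
    omega
  · push_neg at hflat
    obtain ⟨m, hm⟩ := hflat
    obtain ⟨w⟩ := hTD.conn.preconnected z m
    obtain ⟨x, y, hxy, hPx, hPy⟩ := exists_transition (fun n => l n = l z) w rfl hm
    have hne : l x ≠ l y := fun h => hPy (h ▸ hPx)
    have hsep := sep_of_treeEdge hTD hmax hxy hne
    have hk := hconn.2 _ hsep
    have hssub : l x ∩ l y ⊂ l x := by
      constructor
      · exact Set.inter_subset_left
      · intro hsub
        have hxsuby : l x ⊆ l y := fun w hw => (hsub hw).2
        exact hne (le_antisymm hxsuby ((hmax x).2 (hmax y).1 hxsuby))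
    have := Set.ncard_lt_ncard hssub (Set.toFinite _)
    rw [hPx] at this hk
    omega
end MyAux3

section MyAux4
open SimpleGraph
variable {V ι : Type*} [Fintype V]

/-- Every separator of minimum size k is the intersection of the bags of a tree edge. -/
lemma sep_eq_treeEdge {G : SimpleGraph V} {k : ℕ} (hconn : KConnected k G)
    {T : SimpleGraph ι} {l : ι → Set V} (hTD : TreeDecomp G T l)
    (hmax : ∀ x : ι, Maximal G.IsClique (l x))
    {S : Set V} (hS : IsSeparator G S) (hk : S.ncard = k) :
    ∃ x y : ι, T.Adj x y ∧ l x ≠ l y ∧ l x ∩ l y = S := by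
  rw [IsSeparator, SimpleGraph.Preconnected] at hS
  push_neg at hS
  obtain ⟨a, b, hab⟩ := hS
  let conn : V → V → Prop := fun p q => ∃ (hp : p ∈ (Sᶜ : Set V)) (hq : q ∈ (Sᶜ : Set V)),
    (G.induce (Sᶜ : Set V)).Reachable ⟨p, hp⟩ ⟨q, hq⟩
  have conn_trans : ∀ {p q r : V}, conn p q → conn q r → conn p r := by
    rintro p q r ⟨hp, hq, h1⟩ ⟨hq', hr, h2⟩
    exact ⟨hp, hr, h1.trans h2⟩
  have hclique_step : ∀ (n : ι) (w w' : V), w ∈ l n → w' ∈ l n → w ∉ S → w' ∉ S →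
      conn w w' := by
    intro n w w' hw hw' hwS hw'S
    by_cases hww : w = w'
    · subst hww; exact ⟨hwS, hwS, Reachable.refl _⟩
    · have hadj : G.Adj w w' := (hmax n).1 hw hw' hww
      exact ⟨hwS, hw'S, SimpleGraph.Adj.reachable (by exact hadj)⟩
  let pA : ι → Prop := fun n => ∃ w, w ∈ l n ∧ conn (a : V) w
  obtain ⟨na, hna⟩ := hTD.coversV (a : V)
  obtain ⟨nb, hnb⟩ := hTD.coversV (b : V)
  have hPa : pA na := ⟨(a : V), hna, ⟨a.2, a.2, Reachable.refl _⟩⟩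
  have hPb : ¬ pA nb := by
    rintro ⟨w, hwln, hcw⟩
    obtain ⟨ha', hw', hr⟩ := hcw
    have h2 : conn w (b : V) := hclique_step nb w (b : V) hwln hnb hw' b.2
    obtain ⟨hp, hq, hreach⟩ := conn_trans ⟨ha', hw', hr⟩ h2
    exact hab hreach
  obtain ⟨wT⟩ := hTD.conn.preconnected na nb
  obtain ⟨x, y, hxy, hPx, hPy⟩ := exists_transition pA wT hPa hPb
  have hne : l x ≠ l y := by
    intro h
    obtain ⟨w, hw, hc⟩ := hPx
    exact hPy ⟨w, h ▸ hw, hc⟩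
  have hsub : l x ∩ l y ⊆ S := by
    rintro w ⟨hwx, hwy⟩
    by_contra hwS
    obtain ⟨w', hw', hc⟩ := hPx
    obtain ⟨ha', hw'S, hr⟩ := hc
    exact hPy ⟨w, hwy, conn_trans ⟨ha', hw'S, hr⟩
      (hclique_step x w' w hw' hwx hw'S hwS)⟩
  have hsep := sep_of_treeEdge hTD hmax hxy hne
  have hkI := hconn.2 _ hsep
  have heq : l x ∩ l y = S :=
    Set.eq_of_subset_of_ncard_le hsub (by omega) (Set.toFinite _)
  exact ⟨x, y, hxy, hne, heq⟩
end MyAux4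

section MyAux5
open SimpleGraph
variable {V : Type*}

/-- Pushing a separator containing both `u` and `v` to the contracted graph. -/
lemma contract_sep_push {G : SimpleGraph V} {u v : V} (he : G.Adj u v) {S : Set V}
    (hS : IsSeparator G S) (hvS : v ∈ S) (huS : u ∈ S) :
    IsSeparator (contract G u v) {w : {x : V // x ≠ v} | (w : V) ∈ S} := by
  rw [IsSeparator, SimpleGraph.Preconnected] at hS
  push_neg at hS
  obtain ⟨a, b, hab⟩ := hS
  set S' : Set {x : V // x ≠ v} := {w | (w : V) ∈ S} with hS'def
  intro hpre
  let down : ↥(S'ᶜ) → ↥(Sᶜ : Set V) := fun c => ⟨(c : {x : V // x ≠ v}).1, c.2⟩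
  have key : ∀ {c d : ↥(S'ᶜ)} (_ : ((contract G u v).induce (S'ᶜ)).Walk c d),
      (G.induce (Sᶜ : Set V)).Reachable (down c) (down d) := by
    intro c d wk
    induction wk with
    | nil => exact Reachable.refl _
    | @cons c e d h q ih =>
      refine (SimpleGraph.Adj.reachable ?_).trans ih
      have hadj : (contract G u v).Adj (c : {x : V // x ≠ v}) (e : {x : V // x ≠ v}) := h
      obtain ⟨hne, hcase⟩ := hadj
      rcases hcase with hGadj | ⟨hcu, -⟩ | ⟨heu, -⟩
      · exact hGadj
      · exact absurd (show ((c : {x : V // x ≠ v}) : V) ∈ S by rw [hcu]; exact huS) c.2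
      · exact absurd (show ((e : {x : V // x ≠ v}) : V) ∈ S by rw [heu]; exact huS) e.2
  have hav : (a : V) ≠ v := fun h => a.2 (h ▸ hvS)
  have hbv : (b : V) ≠ v := fun h => b.2 (h ▸ hvS)
  have haS' : (⟨(a : V), hav⟩ : {x : V // x ≠ v}) ∈ S'ᶜ := fun h => a.2 h
  have hbS' : (⟨(b : V), hbv⟩ : {x : V // x ≠ v}) ∈ S'ᶜ := fun h => b.2 h
  obtain ⟨wk⟩ := hpre ⟨⟨(a : V), hav⟩, haS'⟩ ⟨⟨(b : V), hbv⟩, hbS'⟩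
  exact hab (key wk)


open Classical in
/-- Vertex lifting map used when the merged vertex is not in the separator. -/
noncomputable def liftVer {G : SimpleGraph V} {u v : V} (he : G.Adj u v)
    (S' : Set {x : V // x ≠ v}) (hz : (⟨u, he.ne⟩ : {x : V // x ≠ v}) ∉ S')
    (c : ↥((Subtype.val '' S' : Set V)ᶜ)) : ↥(S'ᶜ) :=
  if h : (c : V) = v then ⟨⟨u, he.ne⟩, hz⟩
  else ⟨⟨(c : V), h⟩, fun hm => c.2 ⟨_, hm, rfl⟩⟩

lemma liftVer_pos {G : SimpleGraph V} {u v : V} (he : G.Adj u v)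
    (S' : Set {x : V // x ≠ v}) (hz : (⟨u, he.ne⟩ : {x : V // x ≠ v}) ∉ S')
    (c : ↥((Subtype.val '' S' : Set V)ᶜ)) (h : (c : V) = v) :
    liftVer he S' hz c = ⟨⟨u, he.ne⟩, hz⟩ := dif_pos h

lemma liftVer_neg {G : SimpleGraph V} {u v : V} (he : G.Adj u v)
    (S' : Set {x : V // x ≠ v}) (hz : (⟨u, he.ne⟩ : {x : V // x ≠ v}) ∉ S')
    (c : ↥((Subtype.val '' S' : Set V)ᶜ)) (h : (c : V) ≠ v) :
    liftVer he S' hz c = ⟨⟨(c : V), h⟩, fun hm => c.2 ⟨_, hm, rfl⟩⟩ := dif_neg h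

/-- Lifting a separator of the contracted graph back to `G`. -/
lemma contract_sep_lift {G : SimpleGraph V} {u v : V} (he : G.Adj u v)
    {S' : Set {x : V // x ≠ v}} (hS' : IsSeparator (contract G u v) S') :
    ((⟨u, he.ne⟩ : {x : V // x ≠ v}) ∈ S' ∧
        IsSeparator G (insert v (Subtype.val '' S'))) ∨
    ((⟨u, he.ne⟩ : {x : V // x ≠ v}) ∉ S' ∧ IsSeparator G (Subtype.val '' S')) := by
  rw [IsSeparator, SimpleGraph.Preconnected] at hS'
  push_neg at hS'
  obtain ⟨a', b', hab⟩ := hS'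
  by_cases hz : (⟨u, he.ne⟩ : {x : V // x ≠ v}) ∈ S'
  · left
    refine ⟨hz, ?_⟩
    set S : Set V := insert v (Subtype.val '' S') with hSdef
    intro hpre
    have hup : ∀ c : ↥(Sᶜ : Set V), ((c : V) ≠ v) := fun c h => c.2 (h ▸ Set.mem_insert v _)
    have hup2 : ∀ c : ↥(Sᶜ : Set V), (⟨(c : V), hup c⟩ : {x : V // x ≠ v}) ∉ S' :=
      fun c h => c.2 (Set.mem_insert_iff.mpr (Or.inr ⟨_, h, rfl⟩))
    let F : ↥(Sᶜ : Set V) → ↥(S'ᶜ) := fun c => ⟨⟨(c : V), hup c⟩, hup2 c⟩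
    have key : ∀ {c d : ↥(Sᶜ : Set V)} (_ : (G.induce (Sᶜ : Set V)).Walk c d),
        ((contract G u v).induce (S'ᶜ)).Reachable (F c) (F d) := by
      intro c d wk
      induction wk with
      | nil => exact Reachable.refl _
      | @cons c e d h q ih =>
        refine (SimpleGraph.Adj.reachable ?_).trans ih
        have hadj : G.Adj (c : V) (e : V) := h
        exact ⟨fun hh => hadj.ne
          (congrArg (fun t : {x : V // x ≠ v} => (t : V)) hh), Or.inl hadj⟩
    have haS : (a' : {x : V // x ≠ v}).1 ∈ (Sᶜ : Set V) := by
      intro hmem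
      rcases Set.mem_insert_iff.mp hmem with h1 | ⟨c, hc, hc2⟩
      · exact (a' : {x : V // x ≠ v}).2 h1
      · exact a'.2 (by rwa [Subtype.val_injective hc2] at hc)
    have hbS : (b' : {x : V // x ≠ v}).1 ∈ (Sᶜ : Set V) := by
      intro hmem
      rcases Set.mem_insert_iff.mp hmem with h1 | ⟨c, hc, hc2⟩
      · exact (b' : {x : V // x ≠ v}).2 h1
      · exact b'.2 (by rwa [Subtype.val_injective hc2] at hc)
    obtain ⟨wk⟩ := hpre ⟨(a' : {x : V // x ≠ v}).1, haS⟩ ⟨(b' : {x : V // x ≠ v}).1, hbS⟩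
    exact hab (key wk)
  · right
    refine ⟨hz, ?_⟩
    intro hpre
    have key : ∀ {c d : ↥((Subtype.val '' S' : Set V)ᶜ)}
        (_ : (G.induce ((Subtype.val '' S' : Set V)ᶜ)).Walk c d),
        ((contract G u v).induce (S'ᶜ)).Reachable (liftVer he S' hz c) (liftVer he S' hz d) := by
      intro c d wk
      induction wk with
      | nil => exact Reachable.refl _
      | @cons c e d h q ih =>
        refine Reachable.trans ?_ ih
        by_cases hFce : liftVer he S' hz c = liftVer he S' hz e
        · rw [hFce]
        · refine SimpleGraph.Adj.reachable ?_
          have hadj : G.Adj (c : V) (e : V) := h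
          have hFne : (liftVer he S' hz c).1 ≠ (liftVer he S' hz e).1 :=
            fun hh => hFce (Subtype.ext hh)
          by_cases hcv : (c : V) = v
          · have hev : (e : V) ≠ v := fun hh => hadj.ne (hcv.trans hh.symm)
            have h1 := liftVer_pos he S' hz c hcv
            have h2 := liftVer_neg he S' hz e hev
            rw [h1, h2]
            rw [h1, h2] at hFne
            exact ⟨hFne, Or.inr (Or.inl ⟨rfl, show G.Adj v (e : V) by rw [hcv] at hadj; exact hadj⟩)⟩
          · by_cases hev : (e : V) = v
            · have h1 := liftVer_neg he S' hz c hcv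
              have h2 := liftVer_pos he S' hz e hev
              rw [h1, h2]
              rw [h1, h2] at hFne
              exact ⟨hFne, Or.inr (Or.inr ⟨rfl, show G.Adj v (c : V) by rw [hev] at hadj; exact hadj.symm⟩)⟩
            · have h1 := liftVer_neg he S' hz c hcv
              have h2 := liftVer_neg he S' hz e hev
              rw [h1, h2]
              rw [h1, h2] at hFne
              exact ⟨hFne, Or.inl hadj⟩
    have haS : (a' : {x : V // x ≠ v}).1 ∈ ((Subtype.val '' S' : Set V)ᶜ) := by
      rintro ⟨c, hc, hc2⟩
      exact a'.2 (by rwa [Subtype.val_injective hc2] at hc)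
    have hbS : (b' : {x : V // x ≠ v}).1 ∈ ((Subtype.val '' S' : Set V)ᶜ) := by
      rintro ⟨c, hc, hc2⟩
      exact b'.2 (by rwa [Subtype.val_injective hc2] at hc)
    obtain ⟨wk⟩ := hpre ⟨(a' : {x : V // x ≠ v}).1, haS⟩ ⟨(b' : {x : V // x ≠ v}).1, hbS⟩
    have hFa : liftVer he S' hz ⟨(a' : {x : V // x ≠ v}).1, haS⟩ = a' :=
      liftVer_neg he S' hz _ (a' : {x : V // x ≠ v}).2
    have hFb : liftVer he S' hz ⟨(b' : {x : V // x ≠ v}).1, hbS⟩ = b' :=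
      liftVer_neg he S' hz _ (b' : {x : V // x ≠ v}).2
    exact hab (hFa ▸ hFb ▸ key wk)
end MyAux5

/-- In a `k`-connected chordal graph with at least `k+2` vertices,
an edge `{u,v}` is contractible iff it lies in a unique maximal clique, or every
tree-edge bag intersection containing both endpoints has size more than `k`. -/
theorem stmt_7 {V ι : Type*} [Fintype V] [DecidableEq V] (G : SimpleGraph V) (k : ℕ)
    (hcard : k + 2 ≤ Fintype.card V) (hconn : KConnected k G) (hch : IsChordal G)
    (T : SimpleGraph ι) (l : ι → Set V) (hT : IsCliqueTree G T l)
    (u v : V) (he : G.Adj u v) :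
    KConnected k (contract G u v) ↔
      ((∃! C : Set V, Maximal G.IsClique C ∧ u ∈ C ∧ v ∈ C) ∨
        ∀ x y : ι, T.Adj x y → u ∈ l x ∩ l y → v ∈ l x ∩ l y →
          k < (l x ∩ l y).ncard) := by
  obtain ⟨hTD, hmax, hsurj⟩ := hT
  have hcardC : Fintype.card {x : V // x ≠ v} = Fintype.card V - 1 := by
    have h1 : Fintype.card {x : V // x = v} = 1 := Fintype.card_subtype_eq v
    have h2 := Fintype.card_subtype_compl (fun x : V => x = v)
    rw [h1] at h2
    exact h2
  constructor
  · intro hK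
    by_contra hR
    push_neg at hR
    obtain ⟨-, x, y, hxy, hu, hv, hle⟩ := hR
    by_cases hxyeq : l x = l y
    · have hbig := bag_large hcard hconn hTD hmax x
      rw [← hxyeq, Set.inter_self] at hle
      omega
    · have hsep := sep_of_treeEdge hTD hmax hxy hxyeq
      have hk1 := hconn.2 _ hsep
      have hkeq : (l x ∩ l y).ncard = k := le_antisymm hle hk1
      have hk2 : 2 ≤ k := by
        have hsubpair : ({u, v} : Set V) ⊆ l x ∩ l y := by
          intro w hw
          simp only [Set.mem_insert_iff, Set.mem_singleton_iff] at hw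
          rcases hw with rfl | rfl
          · exact hu
          · exact hv
        have h2 := Set.ncard_le_ncard hsubpair (Set.toFinite _)
        rw [Set.ncard_pair he.ne] at h2
        omega
      have hpush := contract_sep_push he hsep hv hu
      have hC1 : ({w : {x : V // x ≠ v} | (w : V) ∈ l x ∩ l y}).ncard = k - 1 := by
        have himg : Subtype.val '' {w : {x : V // x ≠ v} | (w : V) ∈ l x ∩ l y}
            = (l x ∩ l y) \ {v} := by
          ext w
          constructor
          · rintro ⟨c, hc, rfl⟩
            exact ⟨hc, c.2⟩
          · rintro ⟨hw, hwv⟩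
            exact ⟨⟨w, hwv⟩, hw, rfl⟩
        have hinj := Set.ncard_image_of_injective
          {w : {x : V // x ≠ v} | (w : V) ∈ l x ∩ l y} (Subtype.val_injective)
        rw [himg] at hinj
        have hdiff : ((l x ∩ l y) \ {v}).ncard + 1 = (l x ∩ l y).ncard := by
          rw [← Set.ncard_insert_of_notMem (fun hmem => hmem.2 rfl) (Set.toFinite _),
            Set.insert_diff_singleton, Set.insert_eq_of_mem hv]
        omega
      have hfinal := hK.2 _ hpush
      omega
  · intro hR
    by_contra hK
    rw [KConnected] at hK
    push_neg at hK
    have hcardgt : k < Fintype.card {x : V // x ≠ v} := by rw [hcardC]; omega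
    obtain ⟨S', hS'sep, hS'lt⟩ := hK hcardgt
    rcases contract_sep_lift he hS'sep with ⟨hz, hsep⟩ | ⟨hz, hsep⟩
    · have hnotmem : v ∉ Subtype.val '' S' := by rintro ⟨c, -, hc⟩; exact c.2 hc
      have hSn : (insert v (Subtype.val '' S')).ncard = S'.ncard + 1 := by
        rw [Set.ncard_insert_of_notMem hnotmem (Set.toFinite _),
          Set.ncard_image_of_injective _ Subtype.val_injective]
      have hk1 := hconn.2 _ hsep
      have hkeq : (insert v (Subtype.val '' S')).ncard = k := by omega
      obtain ⟨x, y, hxy, hlne, hI⟩ := sep_eq_treeEdge hconn hTD hmax hsep hkeq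
      have huS : u ∈ insert v (Subtype.val '' S') :=
        Set.mem_insert_iff.mpr (Or.inr ⟨⟨u, he.ne⟩, hz, rfl⟩)
      have hvS : v ∈ insert v (Subtype.val '' S') := Set.mem_insert _ _
      have huI : u ∈ l x ∩ l y := by rw [hI]; exact huS
      have hvI : v ∈ l x ∩ l y := by rw [hI]; exact hvS
      rcases hR with ⟨C, hC, hCuniq⟩ | hii
      · exact hlne ((hCuniq (l x) ⟨hmax x, huI.1, hvI.1⟩).trans
          (hCuniq (l y) ⟨hmax y, huI.2, hvI.2⟩).symm)
      · have hlt := hii x y hxy huI hvI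
        rw [hI, hkeq] at hlt
        omega
    · have hk1 := hconn.2 _ hsep
      rw [Set.ncard_image_of_injective _ Subtype.val_injective] at hk1
      omega
end

section
/- Let G be a k-connected chordal graph with clique tree T and let e = {u,v} be an edge contained in at least two maximal cliques of G. If there is an edge {x,y} of T with {u,v} ⊆ l(x) ∩ l(y) and |l(x) ∩ l(y)| ≤ k, then e is not contractible. -/
open SimpleGraph

section Aux

variable {V ι : Type*} {G : SimpleGraph V} {T : SimpleGraph ι} {l : ι → Set V}

/-- extract a T-walk with support in s from connectivity of induced subgraph -/
lemma walk_of_induce_connected {s : Set ι} (hs : (T.induce s).Connected)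
    {a b : ι} (ha : a ∈ s) (hb : b ∈ s) :
    ∃ w : T.Walk a b, ∀ z ∈ w.support, z ∈ s := by
  obtain ⟨w0⟩ := hs ⟨a, ha⟩ ⟨b, hb⟩
  refine ⟨w0.map (SimpleGraph.Embedding.induce s).toHom, ?_⟩
  intro z hz
  replace hz : z ∈ (w0.map (SimpleGraph.Embedding.induce s).toHom).support := hz
  rw [SimpleGraph.Walk.support_map, List.mem_map] at hz
  obtain ⟨z', -, rfl⟩ := hz
  exact z'.2

lemma reach_step {p q : ι} :
    ∀ {a b : ι} (w : T.Walk a b),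
      ((T \ fromEdgeSet {s(p,q)}).Reachable b p ∨ (T \ fromEdgeSet {s(p,q)}).Reachable b q) →
      ((T \ fromEdgeSet {s(p,q)}).Reachable a p ∨ (T \ fromEdgeSet {s(p,q)}).Reachable a q) := by
  intro a b w
  induction w with
  | nil => exact id
  | cons h w ih =>
    intro hb
    rename_i x y _
    by_cases hc : s(x, y) = s(p, q)
    · rw [Sym2.eq_iff] at hc
      rcases hc with ⟨rfl, rfl⟩ | ⟨rfl, rfl⟩
      · exact Or.inl (Reachable.refl _)
      · exact Or.inr (Reachable.refl _)
    · have hadj : (T \ fromEdgeSet {s(p,q)}).Adj x y := by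
        simp only [sdiff_adj, fromEdgeSet_adj, Set.mem_singleton_iff, not_and]
        exact ⟨h, fun he => absurd he hc⟩
      rcases ih hb with h1 | h1
      · exact Or.inl (hadj.reachable.trans h1)
      · exact Or.inr (hadj.reachable.trans h1)

lemma reach_side (hconn : T.Connected) (p q : ι) (z : ι) :
    (T \ fromEdgeSet {s(p,q)}).Reachable z p ∨ (T \ fromEdgeSet {s(p,q)}).Reachable z q := by
  obtain ⟨w⟩ := hconn z p
  exact reach_step w (Or.inl (Reachable.refl _))

lemma cross_lemma {p q : ι} :
    ∀ {a b : ι} (w : T.Walk a b),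
      (T \ fromEdgeSet {s(p,q)}).Reachable a p →
      ¬ (T \ fromEdgeSet {s(p,q)}).Reachable b p →
      p ∈ w.support ∧ q ∈ w.support := by
  intro a b w
  induction w with
  | nil => intro h1 h2; exact absurd h1 h2
  | cons h w ih =>
    intro h1 h2
    rename_i x y _
    by_cases hc : s(x, y) = s(p, q)
    · rw [Sym2.eq_iff] at hc
      rcases hc with ⟨rfl, rfl⟩ | ⟨rfl, rfl⟩
      · exact ⟨by simp [SimpleGraph.Walk.support_cons],
          by simp [SimpleGraph.Walk.support_cons, w.start_mem_support]⟩
      · exact ⟨by simp [SimpleGraph.Walk.support_cons, w.start_mem_support],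
          by simp [SimpleGraph.Walk.support_cons]⟩
    · have hadj : (T \ fromEdgeSet {s(p,q)}).Adj x y := by
        simp only [sdiff_adj, fromEdgeSet_adj, Set.mem_singleton_iff, not_and]
        exact ⟨h, fun he => absurd he hc⟩
      have h1' : (T \ fromEdgeSet {s(p,q)}).Reachable y p :=
        (hadj.symm.reachable).trans h1
      obtain ⟨hp, hq⟩ := ih h1' h2
      exact ⟨by simp [SimpleGraph.Walk.support_cons, hp],
        by simp [SimpleGraph.Walk.support_cons, hq]⟩

lemma exists_change (S : Set V) :
    ∀ {a b : ι} (w : T.Walk a b), l a = S → l b ≠ S →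
    ∃ p q : ι, T.Adj p q ∧ p ∈ w.support ∧ q ∈ w.support ∧ l p = S ∧ l q ≠ S := by
  intro a b w
  induction w with
  | nil => intro h1 h2; exact absurd h1 h2
  | @cons a c b h w ih =>
    intro h1 h2
    by_cases hc : l c = S
    · obtain ⟨p, q, hpq, hp, hq, hps, hqs⟩ := ih hc h2
      exact ⟨p, q, hpq, by simp [SimpleGraph.Walk.support_cons, hp],
        by simp [SimpleGraph.Walk.support_cons, hq], hps, hqs⟩
    · exact ⟨a, c, h, by simp [SimpleGraph.Walk.support_cons],
        by simp [SimpleGraph.Walk.support_cons, w.start_mem_support], h1, hc⟩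

/-- Key separation lemma: for a tree edge with distinct bags, the bag
intersection is a separator. -/
lemma sep_of_tree_edge (hT : IsCliqueTree G T l) {p q : ι}
    (hpq : T.Adj p q) (hne : l p ≠ l q) :
    IsSeparator G (l p ∩ l q) := by
  obtain ⟨htd, hmax, -⟩ := hT
  set T' := T \ fromEdgeSet {s(p,q)} with hT'
  have hbr : ¬ T'.Reachable p q := by
    have := (isAcyclic_iff_forall_adj_isBridge.mp htd.acyclic) hpq
    rw [isBridge_iff] at this
    exact this
  -- sides
  set PS : V → Prop := fun w => ∃ z, T'.Reachable z p ∧ w ∈ l z with hPS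
  set QS : V → Prop := fun w => ∃ z, T'.Reachable z q ∧ w ∈ l z with hQS
  have both : ∀ w : V, PS w → QS w → w ∈ l p ∩ l q := by
    rintro w ⟨z1, hz1, hw1⟩ ⟨z2, hz2, hw2⟩
    obtain ⟨wk, hwk⟩ := walk_of_induce_connected (htd.subtree w) hw1 hw2
    have hz2' : ¬ T'.Reachable z2 p := fun hr => hbr (hr.symm.trans hz2)
    obtain ⟨hp, hq⟩ := cross_lemma wk hz1 hz2'
    exact ⟨hwk p hp, hwk q hq⟩
  have hsides : ∀ w : V, PS w ∨ QS w := by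
    intro w
    obtain ⟨z, hz⟩ := htd.coversV w
    rcases reach_side htd.conn p q z with h | h
    · exact Or.inl ⟨z, h, hz⟩
    · exact Or.inr ⟨z, h, hz⟩
  -- incomparability of distinct maximal cliques
  have hpnq : ¬ l p ⊆ l q := fun hsub =>
    hne (le_antisymm hsub ((hmax p).2 (hmax q).1 hsub))
  have hqnp : ¬ l q ⊆ l p := fun hsub =>
    hne.symm (le_antisymm hsub ((hmax q).2 (hmax p).1 hsub))
  obtain ⟨a', ha'p, ha'q⟩ := Set.not_subset.mp hpnq
  obtain ⟨b', hb'q, hb'p⟩ := Set.not_subset.mp hqnp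
  have ha'c : a' ∈ (l p ∩ l q)ᶜ := fun h => ha'q h.2
  have hb'c : b' ∈ (l p ∩ l q)ᶜ := fun h => hb'p h.1
  intro hpre
  -- invariant along walks in the induced graph
  have step : ∀ {c d : (↥((l p ∩ l q)ᶜ))}
      (w : (G.induce ((l p ∩ l q)ᶜ)).Walk c d), PS c.1 → PS d.1 := by
    intro c d w
    induction w with
    | nil => exact id
    | @cons c e d h w ih =>
      intro hc
      have hAdj : G.Adj c.1 e.1 := h
      obtain ⟨z, hcz, hez⟩ := htd.coversE hAdj
      rcases reach_side htd.conn p q z with hzp | hzq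
      · exact ih ⟨z, hzp, hez⟩
      · exact absurd (both c.1 hc ⟨z, hzq, hcz⟩) c.2
  obtain ⟨w⟩ := hpre ⟨a', ha'c⟩ ⟨b', hb'c⟩
  have hPb : PS b' := step w ⟨p, Reachable.refl _, ha'p⟩
  exact hb'c (both b' hPb ⟨q, Reachable.refl _, hb'q⟩)

end Aux

section Final

lemma not_kconn_of_sep {V : Type*} [Fintype V] [DecidableEq V] (G : SimpleGraph V) (k : ℕ)
    {u v : V} (huv : u ≠ v) {S : Set V} (hsep : IsSeparator G S)
    (hu : u ∈ S) (hv : v ∈ S) (hk : S.ncard ≤ k) :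
    ¬ KConnected k (contract G u v) := by
  rintro ⟨-, hKs⟩
  set S'' : Set {x : V // x ≠ v} := {a | a.1 ∈ S} with hS''
  have hsep'' : IsSeparator (contract G u v) S'' := by
    intro hpre
    apply hsep
    intro a b
    have hav : a.1 ≠ v := fun h => a.2 (h ▸ hv)
    have hbv : b.1 ≠ v := fun h => b.2 (h ▸ hv)
    let F : ((contract G u v).induce (S''ᶜ)) →g (G.induce (Sᶜ)) :=
      { toFun := fun c => ⟨c.1.1, c.2⟩
        map_rel' := by
          rintro ⟨⟨c, hcv⟩, hc⟩ ⟨⟨d, hdv⟩, hd⟩ hadj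
          obtain ⟨hne, hor⟩ := hadj
          rcases hor with h | ⟨h, -⟩ | ⟨h, -⟩
          · exact h
          · have hcu : c = u := h
            exact absurd (show c ∈ S from hcu ▸ hu) hc
          · have hdu : d = u := h
            exact absurd (show d ∈ S from hdu ▸ hu) hd }
    have := (hpre ⟨⟨a.1, hav⟩, a.2⟩ ⟨⟨b.1, hbv⟩, b.2⟩).map F
    exact this
  have hsub : Subtype.val '' S'' = S \ {v} := by
    ext w
    simp only [Set.mem_image, Set.mem_diff, Set.mem_singleton_iff, hS'',
      Set.mem_setOf_eq]
    constructor
    · rintro ⟨⟨w', hw'⟩, hw, rfl⟩; exact ⟨hw, hw'⟩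
    · rintro ⟨hw, hwv⟩; exact ⟨⟨w, hwv⟩, hw, rfl⟩
  have hcard : S''.ncard = S.ncard - 1 := by
    rw [← Set.ncard_image_of_injective S'' Subtype.val_injective, hsub,
      Set.ncard_diff_singleton_of_mem hv]
  have h2 : 2 ≤ S.ncard := by
    have : ({u, v} : Set V) ⊆ S := by
      rintro w (rfl | rfl); exacts [hu, hv]
    calc 2 = ({u, v} : Set V).ncard := (Set.ncard_pair huv).symm
      _ ≤ S.ncard := Set.ncard_le_ncard this S.toFinite
  have := hKs S'' hsep''
  omega

end Final

/-- If an edge of a `k`-connected chordal graph lies in at least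
two maximal cliques and some tree-edge bag intersection containing both its
endpoints has size at most `k`, then the edge is not contractible. -/
theorem stmt_16 {V ι : Type*} [Fintype V] [DecidableEq V] (G : SimpleGraph V) (k : ℕ)
    (hcard : k + 2 ≤ Fintype.card V) (hconn : KConnected k G) (hch : IsChordal G)
    (T : SimpleGraph ι) (l : ι → Set V) (hT : IsCliqueTree G T l)
    (u v : V) (he : G.Adj u v)
    (htwo : ∃ C D : Set V, Maximal G.IsClique C ∧ Maximal G.IsClique D ∧ C ≠ D ∧
      u ∈ C ∧ v ∈ C ∧ u ∈ D ∧ v ∈ D)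
    (hsmall : ∃ x y : ι, T.Adj x y ∧ u ∈ l x ∩ l y ∧ v ∈ l x ∩ l y ∧
      (l x ∩ l y).ncard ≤ k) :
    ¬ KConnected k (contract G u v) := by
  classical
  obtain ⟨x, y, hxy, hu, hv, hk⟩ := hsmall
  have huv : u ≠ v := he.ne
  by_cases hbag : l x = l y
  · -- degenerate case: the two bags coincide
    obtain ⟨C, D, hC, hD, hCD, huC, hvC, huD, hvD⟩ := htwo
    obtain ⟨E, hE, huE, hvE, hEne⟩ :
        ∃ E, Maximal G.IsClique E ∧ u ∈ E ∧ v ∈ E ∧ E ≠ l x := by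
      by_cases hCx : C = l x
      · exact ⟨D, hD, huD, hvD, fun h => hCD (hCx.trans h.symm)⟩
      · exact ⟨C, hC, huC, hvC, hCx⟩
    obtain ⟨d, hd⟩ := hT.2.2 E hE
    have hux : u ∈ l x := hu.1
    have hvx : v ∈ l x := hv.1
    have hud : u ∈ l d := hd.symm ▸ huE
    have hvd : v ∈ l d := hd.symm ▸ hvE
    obtain ⟨wu, hwu⟩ := walk_of_induce_connected (hT.1.subtree u)
      (show x ∈ {z | u ∈ l z} from hux) hud
    obtain ⟨wv, hwv⟩ := walk_of_induce_connected (hT.1.subtree v)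
      (show x ∈ {z | v ∈ l z} from hvx) hvd
    have hpath : wu.toPath = wv.toPath := isAcyclic_iff_path_unique.mp hT.1.acyclic _ _
    set P : T.Walk x d := wu.toPath.1 with hP
    have hPu : ∀ z ∈ P.support, u ∈ l z := fun z hz =>
      hwu z (Walk.support_toPath_subset wu hz)
    have hPv : ∀ z ∈ P.support, v ∈ l z := by
      intro z hz
      have : z ∈ wv.toPath.1.support := by rw [← hpath]; exact hz
      exact hwv z (Walk.support_toPath_subset wv this)
    have hld : l d ≠ l x := by rw [hd]; exact hEne
    obtain ⟨p, q, hpq, hps, hqs, hpS, hqS⟩ := exists_change (T := T) (l x) P rfl hld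
    have hne : l p ≠ l q := fun h => hqS (h.symm.trans hpS)
    have hsep := sep_of_tree_edge hT hpq hne
    have hu' : u ∈ l p ∩ l q := ⟨hPu p hps, hPu q hqs⟩
    have hv' : v ∈ l p ∩ l q := ⟨hPv p hps, hPv q hqs⟩
    have hsub : l p ∩ l q ⊆ l x ∩ l y := by
      rw [← hbag, Set.inter_self, ← hpS]
      exact Set.inter_subset_left
    have hk' : (l p ∩ l q).ncard ≤ k :=
      le_trans (Set.ncard_le_ncard hsub (l x ∩ l y).toFinite) hk
    exact not_kconn_of_sep G k huv hsep hu' hv' hk'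
  · have hsep := sep_of_tree_edge hT hxy hbag
    exact not_kconn_of_sep G k huv hsep hu hv hk
end
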